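/- Let (X, μ) be a measure space, let k ≥ 1, let f_1, …, f_k : X → ℂ be measurable, and suppose there are positive numbers C_i and δ_i, i = 1, …, k, such that for every ε > 0 and each i, μ({x ∈ X : |f_i(x)| ≤ ε}) ≤ C_i ε^{δ_i}. Set δ := (Σ_{i=1}^{k} δ_i^{-1})^{-1} and C := Σ_{i=1}^{k} C_i (k δ / δ_i)^{δ}. Then for every ε > 0, μ({x ∈ X : |f_1(x) ⋯ f_k(x)| ≤ ε}) ≤ C ε^{δ}. -/

import Mathlib

open MeasureTheory

/-- If the measurable functions `f_i : X → ℂ` satisfy the sublevel set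
estimates `μ {x : |f_i(x)| ≤ ε} ≤ C_i ε^{δ_i}` with `C_i, δ_i > 0`, then with
`δ := (Σ δ_i⁻¹)⁻¹` and `C := Σ C_i (k δ / δ_i)^δ`, for every `ε > 0`,
`μ {x : |f_1 ⋯ f_k(x)| ≤ ε} ≤ C ε^δ`. -/
theorem stmt_9 (X : Type*) [MeasurableSpace X] (μ : Measure X)
    (k : ℕ) (hk : 1 ≤ k) (f : Fin k → X → ℂ) (hf : ∀ i, Measurable (f i))
    (C₀ δ₀ : Fin k → ℝ) (hC : ∀ i, 0 < C₀ i) (hδ : ∀ i, 0 < δ₀ i)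
    (hsub : ∀ i, ∀ ε : ℝ, 0 < ε →
      μ {x : X | ‖f i x‖ ≤ ε} ≤ ENNReal.ofReal (C₀ i * ε ^ δ₀ i)) :
    ∀ ε : ℝ, 0 < ε →
      μ {x : X | ‖∏ i, f i x‖ ≤ ε} ≤
        ENNReal.ofReal
          ((∑ i, C₀ i * ((k : ℝ) * (∑ j, (δ₀ j)⁻¹)⁻¹ / δ₀ i) ^ (∑ j, (δ₀ j)⁻¹)⁻¹) *
            ε ^ (∑ j, (δ₀ j)⁻¹)⁻¹) := by
  intro ε hε
  have hne : Nonempty (Fin k) := ⟨⟨0, hk⟩⟩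
  have hkpos : (0 : ℝ) < (k : ℝ) := by exact_mod_cast hk
  set S : ℝ := ∑ j, (δ₀ j)⁻¹ with hS
  have hSpos : 0 < S :=
    Finset.sum_pos (fun j _ => inv_pos.2 (hδ j)) Finset.univ_nonempty
  set d : ℝ := S⁻¹ with hd
  have hdpos : 0 < d := inv_pos.2 hSpos
  set w : Fin k → ℝ := fun i => d / δ₀ i with hwdef
  have hwpos : ∀ i, 0 < w i := fun i => div_pos hdpos (hδ i)
  have hwsum : ∑ i, w i = 1 := by
    simp only [hwdef, div_eq_mul_inv, ← Finset.mul_sum, ← hS, hd]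
    exact inv_mul_cancel₀ hSpos.ne'
  set a : Fin k → ℝ := fun i => ((k : ℝ) * w i * ε) ^ w i with hadef
  have hbase : ∀ i, 0 < (k : ℝ) * w i * ε :=
    fun i => mul_pos (mul_pos hkpos (hwpos i)) hε
  have hapos : ∀ i, 0 < a i := fun i => Real.rpow_pos_of_pos (hbase i) _
  -- AM-GM : ∏ (k * w i)⁻¹ ^ w i ≤ ∑ w i * (k * w i)⁻¹ = 1
  have amgm : (1 : ℝ) ≤ ∏ i, ((k : ℝ) * w i) ^ w i := by
    have h1 : ∏ i, ((k : ℝ) * w i)⁻¹ ^ w i ≤ ∑ i, w i * ((k : ℝ) * w i)⁻¹ :=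
      Real.geom_mean_le_arith_mean_weighted Finset.univ w (fun i => ((k : ℝ) * w i)⁻¹)
        (fun i _ => (hwpos i).le) hwsum
        (fun i _ => (inv_pos.2 (mul_pos hkpos (hwpos i))).le)
    have h2 : ∑ i, w i * ((k : ℝ) * w i)⁻¹ = 1 := by
      have : ∀ i : Fin k, w i * ((k : ℝ) * w i)⁻¹ = (k : ℝ)⁻¹ := by
        intro i
        field_simp
        exact div_self (hwpos i).ne'
      rw [Finset.sum_congr rfl fun i _ => this i]
      simp [Finset.card_univ]
      field_simp
    have h3 : ∏ i, ((k : ℝ) * w i)⁻¹ ^ w i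
        = (∏ i, ((k : ℝ) * w i) ^ w i)⁻¹ := by
      rw [← Finset.prod_inv_distrib]
      exact Finset.prod_congr rfl fun i _ =>
        Real.inv_rpow (mul_pos hkpos (hwpos i)).le _
    rw [h3, h2] at h1
    have hP : 0 < ∏ i, ((k : ℝ) * w i) ^ w i :=
      Finset.prod_pos fun i _ => Real.rpow_pos_of_pos (mul_pos hkpos (hwpos i)) _
    have h4 := mul_le_mul_of_nonneg_right h1 hP.le
    rwa [inv_mul_cancel₀ hP.ne', one_mul] at h4
  have prod_a : ε ≤ ∏ i, a i := by
    have : ∏ i, a i = (∏ i, ((k : ℝ) * w i) ^ w i) * ε ^ (∑ i, w i) := by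
      rw [Real.rpow_sum_of_pos hε, ← Finset.prod_mul_distrib]
      refine Finset.prod_congr rfl fun i _ => ?_
      rw [hadef]
      exact Real.mul_rpow (mul_pos hkpos (hwpos i)).le hε.le
    rw [this, hwsum, Real.rpow_one]
    calc ε = 1 * ε := (one_mul ε).symm
      _ ≤ (∏ i, ((k : ℝ) * w i) ^ w i) * ε :=
          mul_le_mul_of_nonneg_right amgm hε.le
  -- subset of union of sublevel sets
  have hsubset : {x : X | ‖∏ i, f i x‖ ≤ ε}
      ⊆ ⋃ i, {x : X | ‖f i x‖ ≤ a i} := by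
    intro x hx
    by_contra hcon
    simp only [Set.mem_iUnion, Set.mem_setOf_eq, not_exists, not_le] at hcon
    have hlt : ∏ i, a i < ∏ i, ‖f i x‖ :=
      Finset.prod_lt_prod_of_nonempty (fun i _ => hapos i) (fun i _ => hcon i)
        Finset.univ_nonempty
    have habs : ‖∏ i, f i x‖ = ∏ i, ‖f i x‖ :=
      norm_prod _ _
    have hxε : ‖∏ i, f i x‖ ≤ ε := hx
    rw [habs] at hxε
    linarith
  calc μ {x : X | ‖∏ i, f i x‖ ≤ ε}
      ≤ μ (⋃ i, {x : X | ‖f i x‖ ≤ a i}) := measure_mono hsubset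
    _ ≤ ∑' i, μ {x : X | ‖f i x‖ ≤ a i} := measure_iUnion_le _
    _ = ∑ i, μ {x : X | ‖f i x‖ ≤ a i} := tsum_fintype _
    _ ≤ ∑ i, ENNReal.ofReal (C₀ i * a i ^ δ₀ i) :=
        Finset.sum_le_sum fun i _ => hsub i (a i) (hapos i)
    _ = ENNReal.ofReal (∑ i, C₀ i * a i ^ δ₀ i) := by
        rw [ENNReal.ofReal_sum_of_nonneg]
        intro i _
        exact mul_nonneg (hC i).le (Real.rpow_nonneg (hapos i).le _)
    _ = ENNReal.ofReal
          ((∑ i, C₀ i * ((k : ℝ) * d / δ₀ i) ^ d) * ε ^ d) := by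
        congr 1
        rw [Finset.sum_mul]
        refine Finset.sum_congr rfl fun i _ => ?_
        have key : a i ^ δ₀ i = ((k : ℝ) * w i) ^ d * ε ^ d := by
          rw [hadef]
          dsimp only
          rw [← Real.rpow_mul (hbase i).le]
          have hwi : w i * δ₀ i = d := by
            rw [hwdef]; field_simp
            exact div_self (hδ i).ne'
          rw [hwi, Real.mul_rpow (mul_pos hkpos (hwpos i)).le hε.le]
        have hb : (k : ℝ) * w i = (k : ℝ) * d / δ₀ i := by
          rw [hwdef]; ring
        rw [key, hb, mul_assoc]
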